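/- Let f : Finset V → ℝ be monotone submodular with f(∅) = 0, S_greedy the greedy set of size k, and S* any set of size k. After one more greedy step from a current set S of size i, the residual gap satisfies f(S*) − f(S_{i+1}) ≤ (1 − 1/k)(f(S*) − f(S_i)), where S_{i+1} is obtained from S_i by adding the element of maximum marginal gain. -/
import Mathlib

lemma greedy_tele {V : Type*} [DecidableEq V] (f : Finset V → ℝ)
    (hsub : ∀ S T : Finset V, S ⊆ T → ∀ x ∉ T,
      f (insert x T) - f T ≤ f (insert x S) - f S)
    (S : Finset V) (T : Finset V) :
    f (S ∪ T) - f S ≤ ∑ y ∈ T \ S, (f (insert y S) - f S) := by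
  induction T using Finset.induction_on with
  | empty => simp
  | @insert a T ha ih =>
    by_cases haS : a ∈ S
    · have h1 : S ∪ insert a T = S ∪ T := by
        rw [Finset.union_insert, Finset.insert_eq_self.mpr (by simp [haS])]
      have h2 : insert a T \ S = T \ S := Finset.insert_sdiff_of_mem T haS
      rw [h1, h2]; exact ih
    · have h1 : S ∪ insert a T = insert a (S ∪ T) := Finset.union_insert a S T
      have h2 : insert a T \ S = insert a (T \ S) :=
        Finset.insert_sdiff_of_notMem T haS
      have haTS : a ∉ T \ S := by simp [ha]
      have haST : a ∉ S ∪ T := by simp [ha, haS]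
      have key := hsub S (S ∪ T) (Finset.subset_union_left) a haST
      rw [h1, h2, Finset.sum_insert haTS]
      linarith

theorem greedy_step_gap {V : Type*} [Fintype V] [DecidableEq V]
    (f : Finset V → ℝ)
    (hempty : f ∅ = 0)
    (hmono : ∀ S T : Finset V, S ⊆ T → f S ≤ f T)
    (hsub : ∀ S T : Finset V, S ⊆ T → ∀ x ∉ T,
      f (insert x T) - f T ≤ f (insert x S) - f S)
    (k : ℕ) (hk : 0 < k)
    (Sstar : Finset V) (hcard : Sstar.card = k)
    (hopt : ∀ T : Finset V, T.card = k → f T ≤ f Sstar)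
    (S : Finset V) (x : V) (hx : x ∉ S)
    (hbest : ∀ y ∉ S, f (insert y S) - f S ≤ f (insert x S) - f S) :
    f Sstar - f (insert x S) ≤ (1 - 1 / (k : ℝ)) * (f Sstar - f S) := by
  set g := f (insert x S) - f S with hg
  have hg0 : 0 ≤ g := by
    have := hmono S (insert x S) (Finset.subset_insert _ _); linarith
  have hsum : ∑ y ∈ Sstar \ S, (f (insert y S) - f S) ≤ (Sstar \ S).card • g := by
    apply Finset.sum_le_card_nsmul
    intro y hy
    exact hbest y (Finset.mem_sdiff.mp hy).2
  have hcardle : ((Sstar \ S).card : ℝ) ≤ k := by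
    have := Finset.card_le_card (Finset.sdiff_subset (s := Sstar) (t := S))
    rw [hcard] at this
    exact_mod_cast this
  have h1 : f Sstar - f S ≤ (k : ℝ) * g := by
    have hmu : f Sstar ≤ f (S ∪ Sstar) := hmono _ _ Finset.subset_union_right
    have htele := greedy_tele f hsub S Sstar
    have : ((Sstar \ S).card : ℝ) * g ≤ (k : ℝ) * g :=
      mul_le_mul_of_nonneg_right hcardle hg0
    rw [nsmul_eq_mul] at hsum
    linarith
  have hk' : (0 : ℝ) < k := by exact_mod_cast hk
  have h2 : (f Sstar - f S) / k ≤ g := (div_le_iff₀ hk').mpr (by linarith)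
  have h3 : (1 - 1 / (k : ℝ)) * (f Sstar - f S)
      = (f Sstar - f S) - (f Sstar - f S) / k := by ring
  rw [h3]
  have : f (insert x S) = f S + g := by rw [hg]; ring
  linarith
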